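/- Let k be a perfect field of characteristic 2, W = W(k) its ring of 2-typical Witt vectors, and B the field of fractions of W. Let e ≥ 1 and let f ∈ W[t] be a monic polynomial of degree e which is Eisenstein with respect to the maximal ideal 2W (every coefficient of f other than the leading one lies in 2W, and the constant coefficient does not lie in 4W). Then, inside the polynomial ring B[t], the W-subalgebra generated by t together with the elements f^i/i! for all i ∈ ℕ is equal to the W-subalgebra generated by t together with the elements t^{e·i}/i! for all i ∈ ℕ. In particular, this W-algebra depends only on e and not on the choice of the Eisenstein polynomial f. -/

import Mathlib

set_option synthInstance.maxHeartbeats 1000000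
set_option maxHeartbeats 1000000

open Polynomial

section AuxSection
variable (k : Type*) [Field k] [Fact (Nat.Prime 2)] [CharP k 2] [PerfectRing k 2]

lemma aux_isUnit (r : ℕ) (hr : ¬ 2 ∣ r) : IsUnit (r : WittVector 2 k) := by
  apply WittVector.isUnit_of_coeff_zero_ne_zero
  have h : ((r : WittVector 2 k)).coeff 0 = (r : k) := by
    rw [← WittVector.constantCoeff_apply, map_natCast]
  rw [h]
  simpa [CharP.cast_eq_zero_iff k 2 r] using hr

lemma aux_nat_ne_zero (n : ℕ) (hn : n ≠ 0) :
    ((n : FractionRing (WittVector 2 k))) ≠ 0 := by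
  set W := WittVector 2 k
  set B := FractionRing W
  set v := n.factorization 2 with hv_def
  have hsplit : n = 2 ^ v * (n / 2 ^ v) := (Nat.ordProj_mul_ordCompl_eq_self n 2).symm
  have hodd : ¬ 2 ∣ (n / 2 ^ v) := Nat.not_dvd_ordCompl Nat.prime_two hn
  obtain ⟨u, hu⟩ := aux_isUnit k (n / 2 ^ v) hodd
  have hnW : (n : W) = 2 ^ v * u := by
    rw [hu]; have h := congrArg (Nat.cast : ℕ → W) hsplit; rw [Nat.cast_mul, Nat.cast_pow, Nat.cast_ofNat] at h; exact h
  have hnB : (n : B) = algebraMap W B ((n : W)) := by simp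
  rw [hnB, hnW]
  simp only [map_mul, map_pow]
  apply mul_ne_zero
  · refine pow_ne_zero _ ?_
    have h2 : (algebraMap W B) (2 : W) = (2 : B) := map_ofNat _ 2
    rw [h2]
    exact_mod_cast WittVector.FractionRing.p_nonzero 2 k
  · intro h
    have := (IsFractionRing.injective W B) (h.trans (map_zero _).symm)
    exact u.ne_zero this

lemma aux_two_pow (m : ℕ) :
    ∃ w : WittVector 2 k, algebraMap (WittVector 2 k) (FractionRing (WittVector 2 k)) w
      = ((m.factorial : FractionRing (WittVector 2 k)))⁻¹ * 2 ^ m := by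
  set W := WittVector 2 k
  set B := FractionRing W
  set v := (m.factorial).factorization 2 with hv_def
  have hvle : v ≤ m := by
    have h := sub_one_mul_padicValNat_factorial (p := 2) m
    have hfac : v = padicValNat 2 (m.factorial) := Nat.factorization_def _ Nat.prime_two
    omega
  have hsplit : m.factorial = 2 ^ v * (m.factorial / 2 ^ v) :=
    (Nat.ordProj_mul_ordCompl_eq_self (m.factorial) 2).symm
  have hodd : ¬ 2 ∣ (m.factorial / 2 ^ v) :=
    Nat.not_dvd_ordCompl Nat.prime_two m.factorial_ne_zero
  obtain ⟨u, hu⟩ := aux_isUnit k (m.factorial / 2 ^ v) hodd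
  have hfactW : (m.factorial : W) = 2 ^ v * u := by
    rw [hu]; have h := congrArg (Nat.cast : ℕ → W) hsplit; rw [Nat.cast_mul, Nat.cast_pow, Nat.cast_ofNat] at h; exact h
  have hfactB : (m.factorial : B) = algebraMap W B ((m.factorial : W)) := by simp
  have hne : (m.factorial : B) ≠ 0 := aux_nat_ne_zero k _ m.factorial_ne_zero
  refine ⟨2 ^ (m - v) * ↑u⁻¹, ?_⟩
  rw [inv_mul_eq_div, eq_div_iff hne, hfactB, hfactW, ← map_mul]
  have : (2 : W) ^ (m - v) * ↑u⁻¹ * (2 ^ v * ↑u) = 2 ^ m := by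
    rw [show (2:W)^(m-v) * ↑u⁻¹ * (2^v * ↑u) = 2^(m-v) * 2^v * (↑u⁻¹ * ↑u) by ring,
      ← pow_add, Nat.sub_add_cancel hvle]
    simp
  rw [this, map_pow, map_ofNat]

lemma aux_divided (S : Subalgebra (WittVector 2 k) (Polynomial (FractionRing (WittVector 2 k))))
    (u v H : Polynomial (FractionRing (WittVector 2 k)))
    (huv : u = v + 2 * H) (hH : H ∈ S)
    (hv : ∀ j : ℕ, ((j.factorial : FractionRing (WittVector 2 k)))⁻¹ • v ^ j ∈ S) :
    ∀ i : ℕ, ((i.factorial : FractionRing (WittVector 2 k)))⁻¹ • u ^ i ∈ S := by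
  intro i
  rw [huv, add_pow, Finset.smul_sum]
  apply Subalgebra.sum_mem
  intro j hj
  have hji : j ≤ i := Nat.lt_succ_iff.mp (Finset.mem_range.mp hj)
  obtain ⟨w, hw⟩ := aux_two_pow k (i - j)
  have hfne : ∀ n : ℕ, ((n.factorial : FractionRing (WittVector 2 k))) ≠ 0 :=
    fun n => aux_nat_ne_zero k _ n.factorial_ne_zero
  have hc : ((i.factorial : FractionRing (WittVector 2 k)))⁻¹ * (i.choose j : FractionRing (WittVector 2 k))
      = ((j.factorial : FractionRing (WittVector 2 k)))⁻¹ * (((i - j).factorial : FractionRing (WittVector 2 k)))⁻¹ := by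
    have h := Nat.choose_mul_factorial_mul_factorial hji
    have hcast : (i.choose j : FractionRing (WittVector 2 k)) * (j.factorial : FractionRing (WittVector 2 k)) * ((i - j).factorial : FractionRing (WittVector 2 k))
        = (i.factorial : FractionRing (WittVector 2 k)) := by exact_mod_cast congrArg (Nat.cast : ℕ → FractionRing (WittVector 2 k)) h
    have hch : (i.choose j : FractionRing (WittVector 2 k)) ≠ 0 := by
      intro h0; apply hfne i; rw [← hcast, h0, zero_mul, zero_mul]
    rw [← hcast, mul_inv, mul_inv]
    linear_combination ((j.factorial : FractionRing (WittVector 2 k)))⁻¹ * (((i - j).factorial : FractionRing (WittVector 2 k)))⁻¹ * mul_inv_cancel₀ hch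
  have key : ((i.factorial : FractionRing (WittVector 2 k)))⁻¹ • (v ^ j * (2 * H) ^ (i - j) * (i.choose j : Polynomial (FractionRing (WittVector 2 k))))
      = (((j.factorial : FractionRing (WittVector 2 k)))⁻¹ • v ^ j) * (w • H ^ (i - j)) := by
    rw [← algebraMap_smul (FractionRing (WittVector 2 k)) w (H ^ (i-j)), hw, smul_mul_smul_comm]
    have h2 : (2 : Polynomial (FractionRing (WittVector 2 k))) * H = (2 : FractionRing (WittVector 2 k)) • H := by rw [smul_eq_C_mul, map_ofNat]
    rw [h2, _root_.smul_pow, mul_smul_comm, mul_comm _ ((i.choose j : Polynomial (FractionRing (WittVector 2 k)))),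
      ← C_eq_natCast, ← smul_eq_C_mul, smul_smul, smul_smul]
    congr 1
    linear_combination (2 : FractionRing (WittVector 2 k)) ^ (i - j) * hc
  rw [key]
  exact mul_mem (hv j) (Subalgebra.smul_mem _ (pow_mem hH _) w)

lemma aux_map_mem (S : Subalgebra (WittVector 2 k) (Polynomial (FractionRing (WittVector 2 k))))
    (hX : Polynomial.X ∈ S) (p : Polynomial (WittVector 2 k)) :
    p.map (algebraMap (WittVector 2 k) (FractionRing (WittVector 2 k))) ∈ S := by
  induction p using Polynomial.induction_on with
  | C a =>
      rw [Polynomial.map_C, ← Polynomial.algebraMap_apply]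
      exact Subalgebra.algebraMap_mem S a
  | add p q hp hq =>
      rw [Polynomial.map_add]; exact add_mem hp hq
  | monomial n a hmon =>
      rw [pow_succ, ← mul_assoc, Polynomial.map_mul, Polynomial.map_X]
      exact mul_mem hmon hX

end AuxSection

/-- Subsection 2.1 of the paper: inside `B[t]`, where `B` is the fraction field of
`W = W(k)`, the `W`-subalgebra generated by `t` and the divided powers `fᵉⁱ/i!` of a degree
`e` Eisenstein polynomial `f` equals the `W`-subalgebra generated by `t` and the elements
`t^{e·i}/i!`; in particular it depends only on `e`. -/
theorem stmt_11 (k : Type*) [Field k] [Fact (Nat.Prime 2)] [CharP k 2] [PerfectRing k 2]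
    (e : ℕ) (he : 1 ≤ e)
    (f : Polynomial (WittVector 2 k))
    (hmonic : f.Monic) (hdeg : f.natDegree = e)
    (heis : ∀ i < e, f.coeff i ∈ Ideal.span {(2 : WittVector 2 k)})
    (hconst : f.coeff 0 ∉ Ideal.span {(4 : WittVector 2 k)}) :
    Algebra.adjoin (WittVector 2 k)
        ({Polynomial.X} ∪
          {g : Polynomial (FractionRing (WittVector 2 k)) |
            ∃ i : ℕ, g = ((i.factorial : FractionRing (WittVector 2 k)))⁻¹ •
              (f.map (algebraMap (WittVector 2 k) (FractionRing (WittVector 2 k)))) ^ i}) =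
      Algebra.adjoin (WittVector 2 k)
        ({Polynomial.X} ∪
          {g : Polynomial (FractionRing (WittVector 2 k)) |
            ∃ i : ℕ, g = ((i.factorial : FractionRing (WittVector 2 k)))⁻¹ •
              Polynomial.X ^ (e * i)}) := by
  -- decompose f = X^e + C 2 * h
  obtain ⟨h, hh⟩ : Polynomial.C (2 : WittVector 2 k) ∣ f - Polynomial.X ^ e := by
    rw [Polynomial.C_dvd_iff_dvd_coeff]
    intro i
    rcases lt_trichotomy i e with hi | hi | hi
    · rw [Polynomial.coeff_sub, Polynomial.coeff_X_pow, if_neg hi.ne, sub_zero]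
      exact Ideal.mem_span_singleton.mp (heis i hi)
    · subst hi
      rw [Polynomial.coeff_sub, Polynomial.coeff_X_pow, if_pos rfl, ← hdeg,
        Polynomial.Monic.coeff_natDegree hmonic, sub_self]
      exact dvd_zero _
    · rw [Polynomial.coeff_sub, Polynomial.coeff_X_pow, if_neg hi.ne', sub_zero]
      rw [Polynomial.coeff_eq_zero_of_natDegree_lt (hdeg ▸ hi)]
      exact dvd_zero _
  have hf' : f = Polynomial.X ^ e + Polynomial.C (2 : WittVector 2 k) * h := by
    rw [← hh]; ring
  have hF : f.map (algebraMap (WittVector 2 k) (FractionRing (WittVector 2 k)))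
      = Polynomial.X ^ e +
        2 * (h.map (algebraMap (WittVector 2 k) (FractionRing (WittVector 2 k)))) := by
    rw [hf', Polynomial.map_add, Polynomial.map_mul, Polynomial.map_pow, Polynomial.map_X,
      Polynomial.map_C, map_ofNat, map_ofNat]
  apply le_antisymm
  · rw [Algebra.adjoin_le_iff]
    rintro x (hx | ⟨i, rfl⟩)
    · exact Algebra.subset_adjoin (Or.inl hx)
    · apply aux_divided k _ _ (Polynomial.X ^ e)
        (h.map (algebraMap (WittVector 2 k) (FractionRing (WittVector 2 k)))) hF
      · exact aux_map_mem k _ (Algebra.subset_adjoin (Or.inl rfl)) h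
      · intro j
        rw [← pow_mul]
        exact Algebra.subset_adjoin (Or.inr ⟨j, rfl⟩)
  · rw [Algebra.adjoin_le_iff]
    rintro x (hx | ⟨i, rfl⟩)
    · exact Algebra.subset_adjoin (Or.inl hx)
    · rw [pow_mul]
      apply aux_divided k _ _
        (f.map (algebraMap (WittVector 2 k) (FractionRing (WittVector 2 k))))
        (-(h.map (algebraMap (WittVector 2 k) (FractionRing (WittVector 2 k)))))
      · rw [hF]; ring
      · exact neg_mem (aux_map_mem k _ (Algebra.subset_adjoin (Or.inl rfl)) h)
      · intro j
        exact Algebra.subset_adjoin (Or.inr ⟨j, rfl⟩)
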